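/- V_T(S) = ∅ if and only if the vector (0_n, −1) ∈ ℝⁿ⁺¹ belongs to the convex cone generated by the vectors (t − s, ‖t‖² − ‖s‖²) for s ∈ S and t ∈ T \ S. -/

import Mathlib

open Finset Metric
open scoped Classical

/-- The multipoint (higher-order) Voronoi cell of `S` within the set of sites `T`. -/
def vcell {n : ℕ} (T S : Finset (EuclideanSpace ℝ (Fin n))) :
    Set (EuclideanSpace ℝ (Fin n)) :=
  {x | ∀ s ∈ S, ∀ t ∈ T \ S, dist x s ≤ dist x t}

section FarkasAux

open scoped RealInnerProductSpace

variable {H : Type*} [NormedAddCommGroup H] [InnerProductSpace ℝ H]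

private lemma cone_caratheodory {ι : Type*} (v : ι → H) (s : Finset ι) (x : H) :
    (∃ l : ι → ℝ, (∀ i ∈ s, 0 ≤ l i) ∧ ∑ i ∈ s, l i • v i = x) →
    ∃ t ⊆ s, LinearIndependent ℝ (fun i : t => v (i : ι)) ∧
      ∃ l : ι → ℝ, (∀ i ∈ t, 0 ≤ l i) ∧ ∑ i ∈ t, l i • v i = x := by
  classical
  induction s using Finset.strongInductionOn with
  | _ s ih =>
    rintro ⟨l, hl, hsum⟩
    by_cases hli : LinearIndependent ℝ (fun i : s => v (i : ι))
    · exact ⟨s, subset_rfl, hli, l, hl, hsum⟩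
    · obtain ⟨g, hg0, j, hgj⟩ := Fintype.not_linearIndependent_iff.mp hli
      set c : ι → ℝ := fun i => if h : i ∈ s then g ⟨i, h⟩ else 0 with hc
      have hcsum : ∑ i ∈ s, c i • v i = 0 := by
        rw [← Finset.sum_attach s (fun i => c i • v i)]
        simpa [hc] using hg0
      have hkey : ∀ c : ι → ℝ, (∑ i ∈ s, c i • v i = 0) → (∃ i ∈ s, 0 < c i) →
          ∃ t ⊆ s, LinearIndependent ℝ (fun i : t => v (i : ι)) ∧
            ∃ l : ι → ℝ, (∀ i ∈ t, 0 ≤ l i) ∧ ∑ i ∈ t, l i • v i = x := by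
        intro c hc0 ⟨i₁, hi₁, hci₁⟩
        set P := s.filter (fun i => 0 < c i) with hP
        have hPne : P.Nonempty := ⟨i₁, by simp [hP, hi₁, hci₁]⟩
        obtain ⟨i₀, hi₀P, hmin⟩ := P.exists_min_image (fun i => l i / c i) hPne
        have hi₀s : i₀ ∈ s := (Finset.mem_filter.mp hi₀P).1
        have hci₀ : 0 < c i₀ := (Finset.mem_filter.mp hi₀P).2
        set μ := l i₀ / c i₀ with hμ
        have hμ0 : 0 ≤ μ := div_nonneg (hl i₀ hi₀s) hci₀.le
        set l' : ι → ℝ := fun i => l i - μ * c i with hl'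
        have hl'0 : ∀ i ∈ s, 0 ≤ l' i := by
          intro i hi
          by_cases h : 0 < c i
          · have := hmin i (Finset.mem_filter.mpr ⟨hi, h⟩)
            have := (le_div_iff₀ h).mp this
            simp only [hl']; linarith
          · push_neg at h
            have : μ * c i ≤ 0 := mul_nonpos_of_nonneg_of_nonpos hμ0 h
            have := hl i hi
            simp only [hl']; linarith
        have hl'i₀ : l' i₀ = 0 := by
          simp only [hl', hμ]
          field_simp
          ring
        have hsum' : ∑ i ∈ s, l' i • v i = x := by
          simp only [hl', sub_smul, mul_smul, Finset.sum_sub_distrib]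
          rw [← Finset.smul_sum, hc0, smul_zero, sub_zero, hsum]
        have herase : ∑ i ∈ s.erase i₀, l' i • v i = x := by
          rw [Finset.sum_erase _ (by rw [hl'i₀, zero_smul])]
          exact hsum'
        obtain ⟨t, hts, hli', hres⟩ := ih (s.erase i₀) (Finset.erase_ssubset hi₀s)
          ⟨l', fun i hi => hl'0 i (Finset.mem_of_mem_erase hi), herase⟩
        exact ⟨t, hts.trans (Finset.erase_subset _ _), hli', hres⟩
      rcases lt_or_gt_of_ne hgj with h | h
      · refine hkey (fun i => - c i) (by simpa using hcsum) ⟨j, j.2, ?_⟩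
        simp only [hc, dif_pos j.2]
        simpa using h
      · exact hkey c hcsum ⟨j, j.2, by simpa [hc, dif_pos j.2] using h⟩

private lemma isClosed_li_cone {ι : Type*} [FiniteDimensional ℝ H] (v : ι → H) (t : Finset ι)
    (hli : LinearIndependent ℝ (fun i : t => v (i : ι))) :
    IsClosed {x : H | ∃ l : ι → ℝ, (∀ i ∈ t, 0 ≤ l i) ∧ ∑ i ∈ t, l i • v i = x} := by
  classical
  set f : (t → ℝ) →ₗ[ℝ] H := Fintype.linearCombination ℝ (fun i : t => v (i : ι)) with hf
  have hinj : Function.Injective f := by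
    rw [← LinearMap.ker_eq_bot, LinearMap.ker_eq_bot']
    intro m hm
    have := Fintype.linearIndependent_iff.mp hli m
      (by simpa [hf, Fintype.linearCombination_apply] using hm)
    funext i; exact this i
  have hemb := LinearMap.isClosedEmbedding_of_injective (f := f)
    (LinearMap.ker_eq_bot.mpr hinj)
  have hset : {x : H | ∃ l : ι → ℝ, (∀ i ∈ t, 0 ≤ l i) ∧ ∑ i ∈ t, l i • v i = x}
      = f '' {l : t → ℝ | ∀ i, 0 ≤ l i} := by
    ext x
    constructor
    · rintro ⟨l, hl0, hsum⟩
      refine ⟨fun i => l i, fun i => hl0 i i.2, ?_⟩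
      simp only [hf, Fintype.linearCombination_apply]
      rw [← hsum, ← Finset.sum_attach t (fun i => l i • v i)]
      rfl
    · rintro ⟨g, hg0, rfl⟩
      refine ⟨fun i => if h : i ∈ t then g ⟨i, h⟩ else 0,
        fun i hi => by simp only [dif_pos hi]; exact hg0 ⟨i, hi⟩, ?_⟩
      simp only [hf, Fintype.linearCombination_apply]
      rw [← Finset.sum_attach t]
      apply Finset.sum_congr rfl
      intro i _
      simp
  rw [hset]
  have hcl : IsClosed {l : t → ℝ | ∀ i, 0 ≤ l i} := by
    have : {l : t → ℝ | ∀ i, 0 ≤ l i} = ⋂ i, (fun l : t → ℝ => l i) ⁻¹' Set.Ici 0 := by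
      ext; simp [Set.mem_iInter]
    rw [this]
    exact isClosed_iInter fun i => isClosed_Ici.preimage (continuous_apply i)
  exact hemb.isClosedMap _ hcl

private lemma isClosed_finset_cone {ι : Type*} [FiniteDimensional ℝ H] (v : ι → H)
    (s : Finset ι) :
    IsClosed {x : H | ∃ l : ι → ℝ, (∀ i ∈ s, 0 ≤ l i) ∧ ∑ i ∈ s, l i • v i = x} := by
  classical
  have hset : {x : H | ∃ l : ι → ℝ, (∀ i ∈ s, 0 ≤ l i) ∧ ∑ i ∈ s, l i • v i = x}
      = ⋃ t ∈ (s.powerset.filter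
            (fun (t : Finset ι) => LinearIndependent ℝ (fun i : t => v (i : ι)))),
          {x : H | ∃ l : ι → ℝ, (∀ i ∈ t, 0 ≤ l i) ∧ ∑ i ∈ t, l i • v i = x} := by
    ext x
    simp only [Set.mem_iUnion, Set.mem_setOf_eq, Finset.mem_filter, Finset.mem_powerset]
    constructor
    · intro hx
      obtain ⟨t, hts, hli, l, hl0, hsum⟩ := cone_caratheodory v s x hx
      exact ⟨t, ⟨hts, hli⟩, l, hl0, hsum⟩
    · rintro ⟨t, ⟨hts, _⟩, l, hl0, hsum⟩
      refine ⟨fun i => if i ∈ t then l i else 0, ?_, ?_⟩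
      · intro i _; dsimp only; split
        · exact hl0 _ ‹_›
        · rfl
      · rw [← Finset.sum_subset hts (fun i _ hit => by simp [hit])]
        rw [← hsum]
        exact Finset.sum_congr rfl fun i hi => by simp [hi]
  rw [hset]
  apply Set.Finite.isClosed_biUnion (Finset.finite_toSet _)
  intro t ht
  exact isClosed_li_cone v t (Finset.mem_filter.mp ht).2

private lemma farkas_cone {ι : Type*} [FiniteDimensional ℝ H] (v : ι → H) (s : Finset ι) (b : H)
    (hb : ¬ ∃ l : ι → ℝ, (∀ i ∈ s, 0 ≤ l i) ∧ ∑ i ∈ s, l i • v i = b) :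
    ∃ y : H, (∀ i ∈ s, 0 ≤ ⟪v i, y⟫) ∧ ⟪y, b⟫ < 0 := by
  classical
  set C : Set H := {x : H | ∃ l : ι → ℝ, (∀ i ∈ s, 0 ≤ l i) ∧ ∑ i ∈ s, l i • v i = x} with hC
  have hconvex : ∀ x ∈ C, ∀ y ∈ C, x + y ∈ C := by
    rintro x ⟨l, hl0, hlsum⟩ y ⟨m, hm0, hmsum⟩
    exact ⟨l + m, fun i hi => add_nonneg (hl0 i hi) (hm0 i hi), by
      simp only [Pi.add_apply, add_smul, Finset.sum_add_distrib, hlsum, hmsum]⟩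
  have hsmul : ∀ (c : ℝ), 0 < c → ∀ x ∈ C, c • x ∈ C := by
    rintro c hc x ⟨l, hl0, hlsum⟩
    exact ⟨c • l, fun i hi => mul_nonneg hc.le (hl0 i hi), by
      simp only [Pi.smul_apply, smul_eq_mul, mul_smul, ← Finset.smul_sum, hlsum]⟩
  set K : ConvexCone ℝ H := { carrier := C, smul_mem' := hsmul, add_mem' := hconvex } with hK
  have hne : (K : Set H).Nonempty := ⟨0, ⟨0, fun i _ => le_refl 0, by simp⟩⟩
  have hcl : IsClosed (K : Set H) := isClosed_finset_cone v s
  have hbK : b ∉ K := hb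
  obtain ⟨y, hy1, hy2⟩ := ProperCone.hyperplane_separation' (x₀ := b)
    ({ toSubmodule := K.toPointedCone ⟨0, fun i _ => le_refl 0, by simp⟩, isClosed' := hcl } :
      ProperCone ℝ H) hbK
  rw [real_inner_comm] at hy2
  refine ⟨y, fun i hi => ?_, hy2⟩
  apply hy1
  show v i ∈ C
  refine ⟨fun j => if j = i then 1 else 0, fun j _ => by dsimp only; split <;> norm_num, ?_⟩
  simp [Finset.sum_ite_eq' s i (fun j => v j), hi]

end FarkasAux

section Bridge

open scoped RealInnerProductSpace

private lemma dist_le_iff_inner {n : ℕ} (x s t : EuclideanSpace ℝ (Fin n)) :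
    dist x s ≤ dist x t ↔ 2 * ⟪x, t - s⟫ ≤ ‖t‖ ^ 2 - ‖s‖ ^ 2 := by
  rw [dist_eq_norm, dist_eq_norm, inner_sub_right]
  constructor
  · intro h
    have h2 : ‖x - s‖ ^ 2 ≤ ‖x - t‖ ^ 2 := pow_le_pow_left₀ (norm_nonneg _) h 2
    rw [norm_sub_sq_real, norm_sub_sq_real] at h2
    linarith
  · intro h
    have h2 : ‖x - s‖ ^ 2 ≤ ‖x - t‖ ^ 2 := by
      rw [norm_sub_sq_real, norm_sub_sq_real]; linarith
    have := Real.sqrt_le_sqrt h2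
    rwa [Real.sqrt_sq (norm_nonneg _), Real.sqrt_sq (norm_nonneg _)] at this

end Bridge

open scoped RealInnerProductSpace in
theorem stmt_1 {n : ℕ} (T S : Finset (EuclideanSpace ℝ (Fin n)))
    (hS : S.Nonempty) (hST : S ⊂ T) :
    vcell T S = ∅ ↔
      ∃ lam : EuclideanSpace ℝ (Fin n) → EuclideanSpace ℝ (Fin n) → ℝ,
        (∀ s t, 0 ≤ lam s t) ∧
        (∑ s ∈ S, ∑ t ∈ T \ S, lam s t •
            ((t - s, ‖t‖ ^ 2 - ‖s‖ ^ 2) : EuclideanSpace ℝ (Fin n) × ℝ)) =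
          ((0, -1) : EuclideanSpace ℝ (Fin n) × ℝ) := by
  classical
  let E := EuclideanSpace ℝ (Fin n)
  let w : E × E → E × ℝ := fun p => (p.2 - p.1, ‖p.2‖ ^ 2 - ‖p.1‖ ^ 2)
  let v : E × E → WithLp 2 (E × ℝ) := fun p => (WithLp.equiv 2 (E × ℝ)).symm (w p)
  let P : Finset (E × E) := S ×ˢ (T \ S)
  let b : WithLp 2 (E × ℝ) := (WithLp.equiv 2 (E × ℝ)).symm (0, -1)
  let Le := WithLp.linearEquiv 2 ℝ (E × ℝ)
  have hLew : ∀ p, Le (v p) = w p := fun p => by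
    simp [Le, v, WithLp.linearEquiv_apply]
  have hLeb : Le b = (0, -1) := by simp [Le, b, WithLp.linearEquiv_apply]
  have hLesum : ∀ l : E × E → ℝ, Le (∑ p ∈ P, l p • v p) = ∑ p ∈ P, l p • w p := by
    intro l
    rw [map_sum]
    exact Finset.sum_congr rfl fun p _ => by rw [map_smul, hLew]
  -- the cone condition in `WithLp 2 (E × ℝ)` matches the conclusion of the statement
  have hequiv : (∃ l : E × E → ℝ, (∀ i ∈ P, 0 ≤ l i) ∧ ∑ i ∈ P, l i • v i = b) ↔
      (∃ lam : E → E → ℝ, (∀ s t, 0 ≤ lam s t) ∧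
        (∑ s ∈ S, ∑ t ∈ T \ S, lam s t • w (s, t)) = ((0, -1) : E × ℝ)) := by
    constructor
    · rintro ⟨l, hl0, hsum⟩
      refine ⟨fun a c => if (a, c) ∈ P then l (a, c) else 0, fun a c => ?_, ?_⟩
      · dsimp only; split
        · exact hl0 _ ‹_›
        · exact le_refl 0
      · have step1 : (∑ s ∈ S, ∑ t ∈ T \ S,
            (if (s, t) ∈ P then l (s, t) else 0) • w (s, t))
            = ∑ s ∈ S, ∑ t ∈ T \ S, l (s, t) • w (s, t) := by
          refine Finset.sum_congr rfl fun a ha => Finset.sum_congr rfl fun c hc => ?_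
          rw [if_pos (Finset.mem_product.mpr ⟨ha, hc⟩)]
        show (∑ s ∈ S, ∑ t ∈ T \ S,
            (if (s, t) ∈ P then l (s, t) else 0) • w (s, t)) = ((0, -1) : E × ℝ)
        rw [step1, ← Finset.sum_product S (T \ S) (fun p => l p • w p)]
        rw [show (S ×ˢ (T \ S) : Finset (E × E)) = P from rfl, ← hLesum l, hsum, hLeb]
    · rintro ⟨lam, hlam0, hsum⟩
      refine ⟨fun p => lam p.1 p.2, fun p _ => hlam0 _ _, ?_⟩
      apply Le.injective
      rw [hLesum, hLeb, ← hsum]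
      exact Finset.sum_product _ _ _
  have hwiff : (∃ lam : E → E → ℝ, (∀ s t, 0 ≤ lam s t) ∧
        (∑ s ∈ S, ∑ t ∈ T \ S, lam s t • w (s, t)) = ((0, -1) : E × ℝ)) ↔
      (∃ lam : E → E → ℝ, (∀ s t, 0 ≤ lam s t) ∧
        (∑ s ∈ S, ∑ t ∈ T \ S, lam s t •
            ((t - s, ‖t‖ ^ 2 - ‖s‖ ^ 2) : E × ℝ)) = ((0, -1) : E × ℝ)) := Iff.rfl
  rw [← hwiff, ← hequiv]
  constructor
  · -- vcell empty → cone membership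
    intro hempty
    by_contra hnl
    obtain ⟨y, hy1, hy2⟩ := farkas_cone v P b hnl
    have hy2' : 0 < y.snd := by
      have hib : ⟪y, b⟫ = ⟪y.fst, (0 : E)⟫ + y.snd * (-1) := by
        rw [WithLp.prod_inner_apply]
        simp only [b, WithLp.equiv_symm_apply, WithLp.ofLp_fst, WithLp.ofLp_snd, RCLike.inner_apply,
          conj_trivial]
        ring
      rw [hib] at hy2
      simp only [inner_zero_right] at hy2
      linarith
    set x₀ : E := (-(2 * y.snd)⁻¹) • y.fst with hx₀
    have hx₀mem : x₀ ∈ vcell T S := by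
      intro s hs t ht
      rw [dist_le_iff_inner]
      have hp : (s, t) ∈ P := Finset.mem_product.mpr ⟨hs, ht⟩
      have h1 := hy1 _ hp
      have hv : ⟪v (s, t), y⟫ = ⟪t - s, y.fst⟫ + (‖t‖ ^ 2 - ‖s‖ ^ 2) * y.snd := by
        rw [WithLp.prod_inner_apply]
        simp only [v, w, WithLp.equiv_symm_apply, WithLp.ofLp_fst, WithLp.ofLp_snd, RCLike.inner_apply,
          conj_trivial]
        ring
      rw [hv] at h1
      have hinner : ⟪x₀, t - s⟫ = (-(2 * y.snd)⁻¹) * ⟪y.fst, t - s⟫ := real_inner_smul_left _ _ _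
      rw [hinner]
      rw [real_inner_comm] at h1
      have hA : -⟪y.fst, t - s⟫ ≤ (‖t‖ ^ 2 - ‖s‖ ^ 2) * y.snd := by linarith
      have h2 := mul_le_mul_of_nonneg_left hA (inv_nonneg.mpr hy2'.le)
      rw [mul_comm (‖t‖ ^ 2 - ‖s‖ ^ 2) y.snd, ← mul_assoc, inv_mul_cancel₀ hy2'.ne', one_mul] at h2
      have hrw : 2 * (-(2 * y.snd)⁻¹ * ⟪y.fst, t - s⟫) = y.snd⁻¹ * -⟪y.fst, t - s⟫ := by
        rw [mul_inv]
        ring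
      rw [hrw]
      exact h2
    rw [hempty] at hx₀mem
    exact Set.notMem_empty x₀ hx₀mem
  · -- cone membership → vcell empty
    rintro ⟨l, hl0, hsum⟩
    rw [Set.eq_empty_iff_forall_notMem]
    intro x hx
    have hsum' : ∑ p ∈ P, l p • w p = ((0 : E), (-1 : ℝ)) := by
      rw [← hLesum l, hsum, hLeb]
    have h1 : ∑ p ∈ P, l p • (p.2 - p.1) = (0 : E) := by
      have h := congrArg Prod.fst hsum'
      simpa only [Prod.fst_sum, w, Prod.smul_mk] using h
    have h2 : ∑ p ∈ P, l p * (‖p.2‖ ^ 2 - ‖p.1‖ ^ 2) = -1 := by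
      have h := congrArg Prod.snd hsum'
      simpa only [Prod.snd_sum, w, Prod.smul_mk, smul_eq_mul] using h
    have h3 : ∑ p ∈ P, l p * ⟪x, p.2 - p.1⟫ = 0 := by
      have h := congrArg (fun z : E => ⟪x, z⟫) h1
      simpa only [inner_sum, real_inner_smul_right, inner_zero_right] using h
    have h4 : ∀ p ∈ P, l p * (2 * ⟪x, p.2 - p.1⟫) ≤ l p * (‖p.2‖ ^ 2 - ‖p.1‖ ^ 2) := by
      intro p hp
      obtain ⟨hp1, hp2⟩ := Finset.mem_product.mp hp
      exact mul_le_mul_of_nonneg_left ((dist_le_iff_inner x p.1 p.2).mp (hx p.1 hp1 p.2 hp2))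
        (hl0 p hp)
    have h5 : ∑ p ∈ P, l p * (2 * ⟪x, p.2 - p.1⟫) ≤ -1 := by
      rw [← h2]
      exact Finset.sum_le_sum h4
    have h6 : ∑ p ∈ P, l p * (2 * ⟪x, p.2 - p.1⟫) = 2 * ∑ p ∈ P, l p * ⟪x, p.2 - p.1⟫ := by
      rw [Finset.mul_sum]
      exact Finset.sum_congr rfl fun p _ => by ring
    rw [h6, h3] at h5
    linarith
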